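/- arXiv:math/0404470 — 3 statements merged into one kernel-verified Lean document; each statement's English description precedes it below -/
import Mathlib

section
/- If M and N are nearly free ℤ-modules, then the tensor product M ⊗_ℤ N is nearly free. -/
open scoped TensorProduct

open Finsupp

/-- Every submodule of `ℕ →₀ ℤ` is free. -/
theorem free_submodule_finsupp_nat (Q : Submodule ℤ (ℕ →₀ ℤ)) : Module.Free ℤ Q := by
  classical
  set I : ℕ → Ideal ℤ := fun n =>
    Submodule.map (Finsupp.lapply n) (Q ⊓ Finsupp.supported ℤ ℤ (Set.Iic n)) with hIdef
  set a : ℕ → ℤ := fun n => Submodule.IsPrincipal.generator (I n) with hadef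
  have hx : ∀ n, ∃ y, y ∈ Q ∧ ↑y.support ⊆ Set.Iic n ∧ y n = a n := by
    intro n
    obtain ⟨y, hy, hyn⟩ := Submodule.mem_map.mp (Submodule.IsPrincipal.generator_mem (I n))
    exact ⟨y, hy.1, (Finsupp.mem_supported ℤ y).mp hy.2, hyn⟩
  choose x hxQ hxsupp hxa using hx
  -- coefficients of elements of `Q` supported in `Iic n` are multiples of `a n`
  have hcoef : ∀ q ∈ Q, ∀ n, ↑q.support ⊆ Set.Iic n → ∃ c : ℤ, q n = c * a n := by
    intro q hq n hsupp
    have h1 : q n ∈ I n :=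
      ⟨q, ⟨hq, (Finsupp.mem_supported ℤ q).mpr hsupp⟩, rfl⟩
    rw [← Submodule.IsPrincipal.span_singleton_generator (I n)] at h1
    obtain ⟨c, hc⟩ := Submodule.mem_span_singleton.mp h1
    exact ⟨c, by rw [← hc]; simp [hadef]⟩
  set T := {n : ℕ // a n ≠ 0} with hTdef
  -- spanning
  have key : ∀ n (q : ℕ →₀ ℤ), q ∈ Q → (∀ k ∈ q.support, k < n) →
      q ∈ Submodule.span ℤ (Set.range fun t : T => x ↑t) := by
    intro n
    induction n with
    | zero =>
      intro q hq hsupp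
      have : q = 0 := by
        ext k
        by_contra hk
        exact Nat.not_lt_zero k (hsupp k (Finsupp.mem_support_iff.mpr hk))
      simp [this]
    | succ n ih =>
      intro q hq hsupp
      have hsupp' : ↑q.support ⊆ Set.Iic n := fun k hk =>
        Nat.lt_succ_iff.mp (hsupp k hk)
      obtain ⟨c, hc⟩ := hcoef q hq n hsupp'
      by_cases hA : a n = 0
      · refine ih q hq fun k hk => ?_
        have hkn : k ≤ n := hsupp' hk
        rcases lt_or_eq_of_le hkn with h | h
        · exact h
        · exfalso
          exact Finsupp.mem_support_iff.mp hk (by rw [h, hc, hA, mul_zero])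
      · set q' := q - c • x n with hq'def
        have hq'Q : q' ∈ Q := Q.sub_mem hq (Q.smul_mem c (hxQ n))
        have hq'n : q' n = 0 := by
          simp [hq'def, hc, hxa n, mul_comm]
        have hq'supp : ∀ k ∈ q'.support, k < n := by
          intro k hk
          have hk1 : q' k ≠ 0 := Finsupp.mem_support_iff.mp hk
          by_contra hcon
          push_neg at hcon
          rcases eq_or_lt_of_le hcon with h | h
          · exact hk1 (h ▸ hq'n)
          · apply hk1
            have h1 : q k = 0 := by
              by_contra h2
              exact absurd (hsupp' (Finsupp.mem_support_iff.mpr h2)) (not_le.mpr h)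
            have h2 : x n k = 0 := by
              by_contra h2
              exact absurd (hxsupp n (Finsupp.mem_support_iff.mpr h2)) (not_le.mpr h)
            simp [hq'def, h1, h2]
        have hmem : x n ∈ Submodule.span ℤ (Set.range fun t : T => x ↑t) :=
          Submodule.subset_span ⟨⟨n, hA⟩, rfl⟩
        have : q = q' + c • x n := by simp [hq'def]
        rw [this]
        exact Submodule.add_mem _ (ih q' hq'Q hq'supp) (Submodule.smul_mem _ _ hmem)
  -- linear independence
  have li : LinearIndependent ℤ (fun t : T => x ↑t) := by
    rw [linearIndependent_iff']
    intro s g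
    induction s using Finset.induction_on_max with
    | empty => simp
    | insert t s hts ih =>
      intro hsum
      have hgt : g t = 0 := by
        have h1 : (∑ i ∈ insert t s, g i • x ↑i) ↑t = 0 := by rw [hsum]; rfl
        rw [Finsupp.finset_sum_apply] at h1
        rw [Finset.sum_insert (fun h => lt_irrefl t (hts t h))] at h1
        have h2 : ∀ i ∈ s, (g i • x ↑i) ↑t = 0 := by
          intro i hi
          have hit : (i : ℕ) < ↑t := hts i hi
          have : x ↑i ↑t = 0 := by
            by_contra h2
            exact absurd (hxsupp ↑i (Finsupp.mem_support_iff.mpr h2)) (not_le.mpr hit)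
          simp [this]
        rw [Finset.sum_eq_zero h2, add_zero] at h1
        have h3 : g t * a ↑t = 0 := by
          simpa [hxa ↑t] using h1
        exact (mul_eq_zero.mp h3).resolve_right t.2
      have hsum' : ∑ i ∈ s, g i • x ↑i = 0 := by
        rw [Finset.sum_insert (fun h => lt_irrefl t (hts t h)), hgt, zero_smul,
          zero_add] at hsum
        exact hsum
      intro i hi
      rcases Finset.mem_insert.mp hi with h | h
      · rw [h]; exact hgt
      · exact ih hsum' i h
  -- build the basis
  let v : T → Q := fun t => ⟨x ↑t, hxQ ↑t⟩
  have liv : LinearIndependent ℤ v := li.of_comp Q.subtype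
  have sp : ⊤ ≤ Submodule.span ℤ (Set.range v) := by
    intro q _
    have h1 : (q : ℕ →₀ ℤ) ∈ Submodule.span ℤ (Set.range fun t : T => x ↑t) := by
      refine key ((q : ℕ →₀ ℤ).support.sup id + 1) q q.2 fun k hk => ?_
      exact Nat.lt_succ_of_le (Finset.le_sup (f := id) hk)
    have h2 : (fun t : T => x ↑t) = Q.subtype ∘ v := rfl
    rw [h2, Set.range_comp, Submodule.span_image] at h1
    obtain ⟨y, hy, hyq⟩ := Submodule.mem_map.mp h1
    have : y = q := Subtype.ext hyq
    exact this ▸ hy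
  exact Module.Free.of_basis (Module.Basis.mk liv sp)

theorem free_bridge {M : Type*} [AddCommGroup M] {i1 i2 : Module ℤ M}
    (h : @Module.Free ℤ M _ _ i1) : @Module.Free ℤ M _ _ i2 := by
  obtain rfl : i1 = i2 :=
    @Subsingleton.elim _ (@Unique.instSubsingleton _ AddCommGroup.uniqueIntModule) i1 i2
  exact h

theorem flat_bridge {M : Type*} [AddCommGroup M] {i1 i2 : Module ℤ M}
    (h : @Module.Flat ℤ M _ _ i1) : @Module.Flat ℤ M _ _ i2 := by
  obtain rfl : i1 = i2 :=
    @Subsingleton.elim _ (@Unique.instSubsingleton _ AddCommGroup.uniqueIntModule) i1 i2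
  exact h

/-- Countable sets span countable submodules over ℤ. -/
theorem countable_span_int {M : Type*} [AddCommGroup M] [Module ℤ M] {s : Set M}
    (hs : s.Countable) : Countable (Submodule.span ℤ s) := by
  haveI := hs.to_subtype
  have h : Countable (Submodule.span ℤ (Set.range ((↑) : s → M))) := inferInstance
  rwa [Subtype.range_coe] at h

theorem countable_of_fg {M : Type*} [AddCommGroup M] [Module ℤ M] {S : Submodule ℤ M}
    (hS : S.FG) : Countable S := by
  obtain ⟨s, hs⟩ := hS
  rw [← hs]
  exact countable_span_int s.finite_toSet.countable

/-- A submodule of a module with a countable basis is free. -/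
theorem free_submodule_of_countable_basis {F : Type*} [AddCommGroup F] [Module ℤ F]
    {ι : Type*} [Countable ι] (b : Module.Basis ι ℤ F) (Q : Submodule ℤ F) :
    Module.Free ℤ Q := by
  obtain ⟨f, hf⟩ := exists_injective_nat ι
  let g : F →ₗ[ℤ] (ℕ →₀ ℤ) := (Finsupp.lmapDomain ℤ ℤ f).comp b.repr.toLinearMap
  have hg : Function.Injective g := by
    exact (Finsupp.mapDomain_injective hf).comp b.repr.injective
  letI : Module ℤ ↥(Q.map g) := (Q.map g).module
  letI : Module ℤ ↥Q := Q.module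
  haveI : Module.Free ℤ ↥(Q.map g) := free_bridge (free_submodule_finsupp_nat (Q.map g))
  exact free_bridge (Module.Free.of_equiv (Submodule.equivMapOfInjective g hg Q).symm)

/-- A ℤ-module all of whose countable submodules are free is flat. -/
theorem flat_of_nearlyFree {M : Type*} [AddCommGroup M] [Module ℤ M]
    (hM : ∀ P : Submodule ℤ M, Countable P → Module.Free ℤ P) : Module.Flat ℤ M := by
  rw [Module.Flat.iff_lTensor_injective']
  intro I
  rw [injective_iff_map_eq_zero]
  intro x hx
  obtain ⟨M₀, hfin, hsub⟩ :=
    TensorProduct.exists_finite_submodule_left_of_setFinite {x} (Set.finite_singleton x)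
  obtain ⟨x₀, hx₀⟩ := hsub rfl
  letI : Module ℤ ↥M₀ := M₀.module
  haveI : Countable M₀ := countable_of_fg (Module.Finite.iff_fg.mp hfin)
  haveI : Module.Free ℤ M₀ := free_bridge (hM M₀ inferInstance)
  haveI : Module.Flat ℤ M₀ := Module.Flat.of_free (R := ℤ) (M := M₀)
  have hcomm : (LinearMap.lTensor M I.subtype).comp (LinearMap.rTensor I M₀.subtype)
      = (LinearMap.rTensor ℤ M₀.subtype).comp (LinearMap.lTensor M₀ I.subtype) := by
    rw [LinearMap.lTensor_comp_rTensor, LinearMap.rTensor_comp_lTensor]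
  have h0 : (LinearMap.rTensor ℤ M₀.subtype) ((LinearMap.lTensor M₀ I.subtype) x₀) = 0 := by
    have := congrArg (fun φ => φ x₀) hcomm
    simp only [LinearMap.comp_apply] at this
    rw [← this, hx₀, hx]
  have hinj1 : Function.Injective (LinearMap.rTensor (R := ℤ) ℤ M₀.subtype) :=
    Module.Flat.rTensor_preserves_injective_linearMap M₀.subtype Subtype.val_injective
  have hinj2 : Function.Injective (LinearMap.lTensor M₀ I.subtype) :=
    (Module.Flat.iff_lTensor_injective' (R := ℤ) (M := M₀)).mp inferInstance I
  have : x₀ = 0 := hinj2 (hinj1 (h0.trans (map_zero _).symm))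
  rw [← hx₀, this, map_zero]

/-- A ℤ-module `M` is *nearly free* if every countable submodule is free. -/
def NearlyFree (M : Type*) [AddCommGroup M] [Module ℤ M] : Prop :=
  ∀ N : Submodule ℤ M, Countable N → Module.Free ℤ N

theorem nearlyFree_bridge {T : Type*} [AddCommGroup T] {i1 i2 : Module ℤ T}
    (h : @NearlyFree T _ i1) : @NearlyFree T _ i2 := by
  obtain rfl : i1 = i2 :=
    @Subsingleton.elim _ (@Unique.instSubsingleton _ AddCommGroup.uniqueIntModule) i1 i2
  exact h

/-- If `M` and `N` are nearly free ℤ-modules, then `M ⊗_ℤ N` is nearly free. -/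
theorem nearlyFree_tensor (M N : Type*) [AddCommGroup M] [Module ℤ M]
    [AddCommGroup N] [Module ℤ N]
    (hM : NearlyFree M) (hN : NearlyFree N) : NearlyFree (M ⊗[ℤ] N) := by
  refine nearlyFree_bridge (i1 := TensorProduct.instModule) ?_
  intro P hP
  classical
  haveI := hP
  -- choose finitely generated submodules containing each element of `P`
  have h1 := fun p : P => TensorProduct.exists_finite_submodule_of_setFinite
    ({(p : M ⊗[ℤ] N)} : Set (M ⊗[ℤ] N)) (Set.finite_singleton _)
  choose mP nP hmfin hnfin hmem using h1
  set M₀ : Submodule ℤ M := ⨆ p : P, mP p with hM₀def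
  set N₀ : Submodule ℤ N := ⨆ p : P, nP p with hN₀def
  letI : Module ℤ ↥M₀ := M₀.module
  letI : Module ℤ ↥N₀ := N₀.module
  letI : Module ℤ (M ⊗[ℤ] N) := TensorProduct.instModule
  letI : Module ℤ (↥M₀ ⊗[ℤ] ↥N₀) := TensorProduct.instModule
  have hM₀c : Countable M₀ := by
    rw [hM₀def, Submodule.iSup_eq_span]
    refine countable_span_int (Set.countable_iUnion fun p => ?_)
    have : Countable (mP p) := countable_of_fg (Module.Finite.iff_fg.mp (hmfin p))
    exact Set.countable_coe_iff.mp this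
  have hN₀c : Countable N₀ := by
    rw [hN₀def, Submodule.iSup_eq_span]
    refine countable_span_int (Set.countable_iUnion fun p => ?_)
    have : Countable (nP p) := countable_of_fg (Module.Finite.iff_fg.mp (hnfin p))
    exact Set.countable_coe_iff.mp this
  haveI : Module.Free ℤ M₀ := free_bridge (hM M₀ hM₀c)
  haveI : Module.Free ℤ N₀ := free_bridge (hN N₀ hN₀c)
  haveI : Module.Flat ℤ M₀ := Module.Flat.of_free (R := ℤ) (M := M₀)
  haveI : Module.Flat ℤ N := flat_of_nearlyFree hN
  set φ := TensorProduct.mapIncl M₀ N₀ with hφdef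
  have hφ : Function.Injective φ := by
    have heq : φ = (LinearMap.rTensor N M₀.subtype).comp
        (LinearMap.lTensor M₀ N₀.subtype) := by
      rw [hφdef, TensorProduct.mapIncl, ← LinearMap.rTensor_comp_lTensor]
    rw [heq]
    exact (Module.Flat.rTensor_preserves_injective_linearMap M₀.subtype
        Subtype.val_injective).comp
      (Module.Flat.lTensor_preserves_injective_linearMap N₀.subtype Subtype.val_injective)
  have hPle : P ≤ LinearMap.range φ := by
    intro z hz
    have := hmem ⟨z, hz⟩ rfl
    exact TensorProduct.range_mapIncl_mono (le_iSup mP ⟨z, hz⟩) (le_iSup nP ⟨z, hz⟩) this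
  -- the preimage of `P` is a submodule of the free module `M₀ ⊗ N₀` with countable basis
  let bM : Module.Basis (Module.Free.ChooseBasisIndex ℤ M₀) ℤ M₀ := Module.Free.chooseBasis ℤ M₀
  let bN : Module.Basis (Module.Free.ChooseBasisIndex ℤ N₀) ℤ N₀ := Module.Free.chooseBasis ℤ N₀
  haveI : Countable (Module.Free.ChooseBasisIndex ℤ M₀) :=
    Countable.of_equiv _ (Equiv.ofInjective _ bM.injective).symm
  haveI : Countable (Module.Free.ChooseBasisIndex ℤ N₀) :=
    Countable.of_equiv _ (Equiv.ofInjective _ bN.injective).symm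
  letI : Module ℤ ↥(P.comap φ) := (P.comap φ).module
  letI : Module ℤ ↥P := P.module
  haveI hfree : Module.Free ℤ (P.comap φ) :=
    free_bridge (free_submodule_of_countable_basis (bM.tensorProduct bN) (P.comap φ))
  have e := (Submodule.equivMapOfInjective φ hφ (P.comap φ)).trans
      (LinearEquiv.ofEq _ _ (Submodule.map_comap_eq_self hPle))
  exact free_bridge (Module.Free.of_equiv e)
end

section
/- If {N_k} is a countable collection of nearly free ℤ-modules, then the product ∏_{k=1}^∞ N_k is nearly free. -/
open Submodule Function Set

attribute [local instance 10000] Submodule.module Submodule.Quotient.module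

namespace NFPi

variable {R : Type*} [CommRing R] [IsDomain R]
variable {M : Type*} [AddCommGroup M] [Module R M]

/-- The saturation of a submodule. -/
def sat (N : Submodule R M) : Submodule R M where
  carrier := {x | ∃ c : R, c ≠ 0 ∧ c • x ∈ N}
  zero_mem' := ⟨1, one_ne_zero, by simp⟩
  add_mem' := by
    rintro a b ⟨c, hc, hca⟩ ⟨d, hd, hdb⟩
    refine ⟨c * d, mul_ne_zero hc hd, ?_⟩
    rw [smul_add]
    exact add_mem (by rw [mul_comm, mul_smul]; exact N.smul_mem d hca)
      (by rw [mul_smul]; exact N.smul_mem c hdb)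
  smul_mem' := by
    rintro t a ⟨c, hc, hca⟩
    exact ⟨c, hc, by rw [smul_comm]; exact N.smul_mem t hca⟩

lemma mem_sat {N : Submodule R M} {x : M} :
    x ∈ sat N ↔ ∃ c : R, c ≠ 0 ∧ c • x ∈ N := Iff.rfl

lemma le_sat (N : Submodule R M) : N ≤ sat N :=
  fun x hx => ⟨1, one_ne_zero, by simpa⟩

lemma sat_mono {N N' : Submodule R M} (h : N ≤ N') : sat N ≤ sat N' := by
  rintro x ⟨c, hc, hcx⟩
  exact ⟨c, hc, h hcx⟩

lemma smul_mem_sat {N : Submodule R M} {c : R} {x : M} (hc : c ≠ 0)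
    (h : c • x ∈ sat N) : x ∈ sat N := by
  obtain ⟨d, hd, hdx⟩ := h
  exact ⟨d * c, mul_ne_zero hd hc, by rwa [mul_smul]⟩

lemma sat_bot [NoZeroSMulDivisors R M] : sat (⊥ : Submodule R M) = ⊥ := by
  refine le_antisymm ?_ bot_le
  rintro x ⟨c, hc, hcx⟩
  rcases smul_eq_zero.mp (Submodule.mem_bot R |>.mp hcx) with h | h
  · exact absurd h hc
  · simpa using h

lemma noZeroSMulDivisors_quotient (N : Submodule R M)
    (h : ∀ (c : R) (x : M), c ≠ 0 → c • x ∈ N → x ∈ N) :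
    NoZeroSMulDivisors R (M ⧸ N) := by
  constructor
  intro c y hcy
  by_cases hc : c = 0
  · exact Or.inl hc
  · right
    obtain ⟨x, rfl⟩ := N.mkQ_surjective y
    rw [← map_smul, N.mkQ_apply, Submodule.Quotient.mk_eq_zero] at hcy
    rw [N.mkQ_apply, Submodule.Quotient.mk_eq_zero]
    exact h c x hc hcy

/-- Assembly lemma: a module which is the union of a chain of submodules starting at `⊥`
with free successive quotients is free. -/
theorem free_of_chain (S : ℕ → Submodule R M) (hmono : Monotone S)
    (h0 : S 0 = ⊥) (htop : ⨆ n, S n = ⊤)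
    (hfree : ∀ n, Module.Free R ((S (n + 1)).map (S n).mkQ)) :
    Module.Free R M := by
  classical
  have good0 : LinearIndependent R ((↑) : (∅ : Set M) → M) ∧ span R (∅ : Set M) = S 0 :=
    ⟨linearIndependent_empty R M, by rw [span_empty, h0]⟩
  have step : ∀ n (T : Set M),
      (LinearIndependent R ((↑) : T → M) ∧ span R T = S n) →
      ∃ T', T ⊆ T' ∧ (LinearIndependent R ((↑) : T' → M) ∧ span R T' = S (n + 1)) := by
    intro n T hT
    haveI : Module.Free R ((S (n + 1)).map (S n).mkQ) := hfree n
    set D := (S (n + 1)).map (S n).mkQ with hD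
    set ι := Module.Free.ChooseBasisIndex R D with hι
    set b : Module.Basis ι R D := Module.Free.chooseBasis R D with hb
    have hbmem : ∀ i : ι, ∃ x, x ∈ S (n + 1) ∧ (S n).mkQ x = (b i : M ⧸ S n) := by
      intro i
      exact Submodule.mem_map.mp (b i).2
    choose c hc1 hc2 using hbmem
    have hcomp : (S n).mkQ ∘ c = (D.subtype) ∘ b := funext fun i => by
      simp [hc2 i]
    have hqind : LinearIndependent R ((S n).mkQ ∘ c) := by
      rw [hcomp]
      exact b.linearIndependent.map' D.subtype (ker_subtype D)
    have hcind : LinearIndependent R c := LinearIndependent.of_comp _ hqind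
    have hkey : ∀ l : ι →₀ R, (S n).mkQ (l.sum fun i a => a • c i)
        = l.sum fun i a => a • ((S n).mkQ (c i)) := by
      intro l
      rw [map_finsuppSum]
      simp
    have hzero_of : ∀ l : ι →₀ R, ((l.sum fun i a => a • ((S n).mkQ (c i))) = 0) → l = 0 := by
      intro l hl
      refine linearIndependent_iff.mp hqind l ?_
      rw [Finsupp.linearCombination_apply]
      simpa using hl
    have hdisj : Disjoint (span R T) (span R (Set.range c)) := by
      rw [Submodule.disjoint_def]
      intro x hx1 hx2
      rw [hT.2] at hx1
      obtain ⟨l, hl⟩ := (Finsupp.mem_span_range_iff_exists_finsupp).mp hx2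
      have hx0 : (S n).mkQ x = 0 := by
        rw [(S n).mkQ_apply, Submodule.Quotient.mk_eq_zero]
        exact hx1
      have hl0 : l = 0 := by
        apply hzero_of
        rw [← hkey, hl, hx0]
      rw [← hl, hl0]
      simp
    have hunion : LinearIndependent R ((↑) : ↥(T ∪ Set.range c) → M) :=
      LinearIndepOn.union (v := id) hT.1 ((linearIndepOn_id_range_iff hcind.injective).mpr hcind) (by simpa using hdisj)
    refine ⟨T ∪ Set.range c, Set.subset_union_left, hunion, ?_⟩
    rw [span_union, hT.2]
    apply le_antisymm
    · refine sup_le (hmono (Nat.le_succ n)) (span_le.mpr ?_)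
      rintro _ ⟨i, rfl⟩
      exact hc1 i
    · intro x hx
      have hmem : (S n).mkQ x ∈ D := Submodule.mem_map_of_mem hx
      set l := b.repr ⟨(S n).mkQ x, hmem⟩ with hl
      have hrep : (l.sum fun i a => a • ((S n).mkQ (c i))) = (S n).mkQ x := by
        have h1 := b.linearCombination_repr ⟨(S n).mkQ x, hmem⟩
        have h2 := congrArg (D.subtype) h1
        rw [Finsupp.linearCombination_apply, map_finsuppSum] at h2
        simp only [map_smul] at h2
        simpa [hc2, hl] using h2
      have hxy : x - (l.sum fun i a => a • c i) ∈ S n := by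
        rw [← Submodule.Quotient.mk_eq_zero, ← (S n).mkQ_apply, map_sub, hkey, hrep, sub_self]
      have hyspan : (l.sum fun i a => a • c i) ∈ span R (Set.range c) :=
        Finsupp.mem_span_range_iff_exists_finsupp.mpr ⟨l, rfl⟩
      have hx' : x = (x - (l.sum fun i a => a • c i)) + (l.sum fun i a => a • c i) := by
        abel
      rw [hx']
      exact Submodule.add_mem _ (Submodule.mem_sup_left hxy) (Submodule.mem_sup_right hyspan)
  choose F hF1 hF2 using step
  let seq : (n : ℕ) → {T : Set M // LinearIndependent R ((↑) : T → M) ∧ span R T = S n} :=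
    fun n => Nat.rec ⟨∅, good0⟩ (fun n p => ⟨F n p.1 p.2, hF2 n p.1 p.2⟩) n
  have hsub : ∀ n, (seq n).1 ⊆ (seq (n + 1)).1 := fun n => hF1 n (seq n).1 (seq n).2
  have hm : Monotone fun n => (seq n).1 := monotone_nat_of_le_succ hsub
  have hind : LinearIndependent R ((↑) : (⋃ n, (seq n).1) → M) :=
    linearIndepOn_iUnion_of_directed (v := id) hm.directed_le (fun n => (seq n).2.1)
  have hspan : span R (⋃ n, (seq n).1) = ⊤ := by
    rw [span_iUnion]
    have he : ∀ n, span R (seq n).1 = S n := fun n => (seq n).2.2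
    simp_rw [he]
    exact htop
  exact Module.Free.of_basis (Module.Basis.mk hind (by rw [Subtype.range_coe, hspan]))



lemma nzsd_of_embed {J : Type*} (f : M →ₗ[R] (J → R)) (hf : Injective f) :
    NoZeroSMulDivisors R M := by
  constructor
  intro c x hcx
  by_cases hc : c = 0
  · exact Or.inl hc
  · right
    apply hf
    rw [map_zero]
    have h1 := congrArg f hcx
    rw [map_smul, map_zero] at h1
    funext j
    have hj := congrFun h1 j
    rw [Pi.smul_apply, smul_eq_mul] at hj
    exact (mul_eq_zero.mp hj).resolve_left hc

section IntPart

variable {M : Type*} [AddCommGroup M] [Module ℤ M]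

/-- helper: free quotient piece, generic ring version. -/
theorem free_quotient_map {R : Type*} [CommRing R] [IsDomain R] [IsPrincipalIdealRing R]
    {M : Type*} [AddCommGroup M] [Module R M]
    (N₁ N₂ : Submodule R M) (hfg : N₂.FG)
    (hsatu : ∀ (c : R) (x : M), c ≠ 0 → c • x ∈ N₁ → x ∈ N₁) :
    Module.Free R (N₂.map N₁.mkQ) := by
  haveI : NoZeroSMulDivisors R (M ⧸ N₁) := by
    constructor
    intro c y hcy
    by_cases hc : c = 0
    · exact Or.inl hc
    · right
      obtain ⟨x, rfl⟩ := N₁.mkQ_surjective y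
      rw [← map_smul, N₁.mkQ_apply, Submodule.Quotient.mk_eq_zero] at hcy
      rw [N₁.mkQ_apply, Submodule.Quotient.mk_eq_zero]
      exact hsatu c x hc hcy
  haveI : Module.Finite R (N₂.map N₁.mkQ) := Module.Finite.iff_fg.mpr (hfg.map _)
  infer_instance

/-- key lemma: in a module embedding into a product of copies of ℤ, the saturation of a
finitely generated submodule is finitely generated. -/
theorem sat_fg' {J : Type*} (f : M →ₗ[ℤ] (J → ℤ)) (hf : Injective f)
    (s : Finset M) :
    (sat (span ℤ (s : Set M))).FG := by
  classical
  set castLin : ℤ →ₗ[ℤ] ℚ := (Int.castAddHom ℚ).toIntLinearMap with hcast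
  set toQ : (J → ℤ) →ₗ[ℤ] (J → ℚ) :=
    LinearMap.pi (fun j => castLin.comp (LinearMap.proj j)) with htoQ
  set ψ : M →ₗ[ℤ] (J → ℚ) := toQ.comp f with hψ
  have hψ_apply : ∀ (x : M) (j : J), ψ x j = ((f x j : ℚ)) := fun x j => rfl
  have hψ_inj : ∀ x : M, ψ x = 0 → x = 0 := by
    intro x hx
    apply hf
    rw [map_zero]
    funext j
    have h := congrFun hx j
    rw [hψ_apply, Pi.zero_apply] at h
    exact_mod_cast h
  set V : Submodule ℚ (J → ℚ) := span ℚ (ψ '' (s : Set M)) with hV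
  haveI : FiniteDimensional ℚ V := FiniteDimensional.span_of_finite ℚ (s.finite_toSet.image ψ)
  have hsatV : ∀ x : M, x ∈ sat (span ℤ (s : Set M)) → ψ x ∈ V := by
    intro x hxs
    obtain ⟨c, hc, hcx⟩ := mem_sat.mp hxs
    have hle : span ℤ (s : Set M) ≤ (V.restrictScalars ℤ).comap ψ :=
      span_le.mpr fun y hy => subset_span (Set.mem_image_of_mem ψ hy)
    have hcx' : c • x ∈ span ℤ (s : Set M) := by
      rw [← int_smul_eq_zsmul ‹Module ℤ M› c x]; exact hcx
    have h1 := hle hcx'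

    rw [Submodule.mem_comap] at h1
    have h1' : _ ∈ V := h1
    have e : (c : ℚ) • ψ x = ψ (c • x) :=
      (Int.cast_smul_eq_zsmul ℚ c (ψ x)).trans (map_zsmul ψ c x).symm
    have h2 : (c : ℚ) • ψ x ∈ V := by rw [e]; exact h1'
    have h3 : ψ x = ((c : ℚ)⁻¹) • ((c : ℚ) • ψ x) := by
      rw [smul_smul, inv_mul_cancel₀ (by exact_mod_cast hc), one_smul]
    rw [h3]
    exact V.smul_mem _ h2
  -- find the finite coordinate set
  set K : Finset J → Submodule ℚ (J → ℚ) := fun F =>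
    V ⊓ ⨅ j ∈ F, LinearMap.ker (LinearMap.proj (R := ℚ) (φ := fun _ : J => ℚ) j) with hK
  have hKmem : ∀ (F : Finset J) (w : J → ℚ),
      w ∈ K F ↔ w ∈ V ∧ ∀ j ∈ F, w j = 0 := by
    intro F w
    simp [hK, Submodule.mem_inf, Submodule.mem_iInf, LinearMap.mem_ker]
  have hKle : ∀ F, K F ≤ V := fun F => inf_le_left
  haveI : ∀ F, FiniteDimensional ℚ (K F) := fun F =>
    Submodule.finiteDimensional_of_le (hKle F)
  obtain ⟨F₀, hF₀⟩ : ∃ F₀ : Finset J, ∀ F : Finset J,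
      Module.finrank ℚ (K F₀) ≤ Module.finrank ℚ (K F) := by
    have hne : (Set.range fun F => Module.finrank ℚ (K F)).Nonempty := ⟨_, ⟨∅, rfl⟩⟩
    obtain ⟨F₀, hmem⟩ := Nat.sInf_mem hne
    exact ⟨F₀, fun F => le_trans (le_of_eq hmem) (Nat.sInf_le ⟨F, rfl⟩)⟩
  have hzero : ∀ w, w ∈ K F₀ → w = 0 := by
    intro w hw
    funext j
    have heq : K (insert j F₀) = K F₀ := by
      apply Submodule.eq_of_le_of_finrank_le
      · intro y hy
        rw [hKmem] at hy ⊢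
        exact ⟨hy.1, fun j' hj' => hy.2 j' (Finset.mem_insert_of_mem hj')⟩
      · exact hF₀ _
    have hw' : w ∈ K (insert j F₀) := heq ▸ hw
    exact ((hKmem _ w).mp hw').2 j (Finset.mem_insert_self j F₀)
  have hprop : ∀ x : M, x ∈ sat (span ℤ (s : Set M)) → (∀ j ∈ F₀, f x j = 0) → x = 0 := by
    intro x hx hxF
    apply hψ_inj
    apply hzero
    rw [hKmem]
    refine ⟨hsatV x hx, fun j hj => ?_⟩
    rw [hψ_apply, hxF j hj]
    simp
  set g : M →ₗ[ℤ] (F₀ → ℤ) :=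
    LinearMap.pi (fun j : F₀ => (LinearMap.proj (j : J)).comp f) with hg
  have hg'inj : Injective (g.domRestrict (sat (span ℤ (s : Set M)))) := by
    rw [injective_iff_map_eq_zero]
    intro x hx
    refine Subtype.ext (hprop x.1 x.2 fun j hj => ?_)
    exact congrFun hx ⟨j, hj⟩
  haveI := isNoetherian_of_injective _ hg'inj
  exact (Submodule.fg_top _).mp (IsNoetherian.noetherian ⊤)


/-- Specker-type theorem: a countable module embedding into a product of copies of `ℤ`
is free. -/
theorem free_of_embed_pi {J : Type*} [Countable M] (f : M →ₗ[ℤ] (J → ℤ))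
    (hf : Injective f) : Module.Free ℤ M := by
  classical
  haveI := nzsd_of_embed f hf
  obtain ⟨a, ha⟩ := exists_surjective_nat M
  set S : ℕ → Submodule ℤ M :=
    fun n => sat (span ℤ (((Finset.range n).image a : Finset M) : Set M)) with hS
  have hmono : Monotone S := fun n m h => sat_mono (span_mono (by
    intro t ht
    simp only [Finset.coe_image, Finset.coe_range] at ht ⊢
    obtain ⟨k, hk, rfl⟩ := ht
    exact ⟨k, lt_of_lt_of_le hk h, rfl⟩))
  have h0 : S 0 = ⊥ := by
    rw [hS]
    simp only [Finset.range_zero, Finset.image_empty, Finset.coe_empty, span_empty]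
    exact sat_bot
  have htop : ⨆ n, S n = ⊤ := by
    rw [eq_top_iff]
    intro x _
    obtain ⟨k, rfl⟩ := ha x
    refine Submodule.mem_iSup_of_mem (k + 1) ?_
    refine le_sat _ (subset_span ?_)
    simp only [Finset.coe_image, Finset.coe_range]
    exact ⟨k, Nat.lt_succ_self k, rfl⟩
  refine free_of_chain S hmono h0 htop (fun n => ?_)
  exact free_quotient_map (S n) (S (n + 1)) (sat_fg' f hf _)
    (fun c x hc hcx => smul_mem_sat hc hcx)

end IntPart

section Helpers

/-- Transport freeness between two (necessarily equal) `ℤ`-module structures. -/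
theorem free_transport {A : Type*} [AddCommGroup A] {i1 i2 : Module ℤ A}
    (h : @Module.Free ℤ A _ _ i1) : @Module.Free ℤ A _ _ i2 := by
  haveI : Subsingleton (Module ℤ A) := (AddCommGroup.uniqueIntModule).instSubsingleton
  rwa [Subsingleton.elim i2 i1]

/-- Any additive homomorphism is `ℤ`-linear, for arbitrary `ℤ`-module structures. -/
def intLinear {A B : Type*} [AddCommGroup A] [AddCommGroup B]
    [Module ℤ A] [Module ℤ B] (f : A →+ B) : A →ₗ[ℤ] B where
  toFun := f
  map_add' := f.map_add
  map_smul' := fun c x => by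
    have h1 := int_smul_eq_zsmul ‹Module ℤ A› c x
    have h2 := int_smul_eq_zsmul ‹Module ℤ B› c (f x)
    simp only [RingHom.id_apply]
    exact (congrArg f h1).trans ((map_zsmul f c x).trans h2.symm)

@[simp] lemma intLinear_apply {A B : Type*} [AddCommGroup A] [AddCommGroup B]
    [Module ℤ A] [Module ℤ B] (f : A →+ B) (x : A) : intLinear f x = f x := rfl

end Helpers

end NFPi

open NFPi in
/-- If `{N k}` is a countable collection of nearly free ℤ-modules, then the
product `∏ k, N k` is nearly free. -/
theorem nearlyFree_pi (N : ℕ → Type*) [∀ k, AddCommGroup (N k)]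
    [∀ k, Module ℤ (N k)] (hN : ∀ k, NearlyFree (N k)) :
    NearlyFree (∀ k, N k) := by
  classical
  intro P hP
  haveI : Countable P := hP
  set proj' : ∀ k, (∀ i, N i) →ₗ[ℤ] N k :=
    fun k => intLinear (Pi.evalAddMonoidHom N k) with hproj
  set Q : ∀ k : ℕ, Submodule ℤ (N k) := fun k => P.map (proj' k) with hQ
  have hQc : ∀ k, Countable (Q k) := by
    intro k
    have h1 : (P : Set (∀ k, N k)).Countable := by
      rw [← Set.countable_coe_iff]
      exact hP
    have h2 : (Q k : Set (N k)).Countable := by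
      rw [hQ]
      simp only [Submodule.map_coe]
      exact h1.image _
    exact h2.to_subtype
  haveI hQfree : ∀ k, Module.Free ℤ (Q k) := fun k => free_transport (hN k (Q k) (hQc k))
  set b : ∀ k, Module.Basis (Module.Free.ChooseBasisIndex ℤ (Q k)) ℤ (Q k) :=
    fun k => Module.Free.chooseBasis ℤ (Q k) with hb
  haveI : ∀ k, Countable (Module.Free.ChooseBasisIndex ℤ (Q k)) :=
    fun k => (b k).injective.countable
  set pk : ∀ k, P →ₗ[ℤ] Q k := fun k =>
    (proj' k).restrict (p := P) (q := Q k)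
      (fun x hx => by rw [hQ]; exact Submodule.mem_map_of_mem hx) with hpk
  set φ : P →ₗ[ℤ] ((Σ k : ℕ, Module.Free.ChooseBasisIndex ℤ (Q k)) → ℤ) :=
    LinearMap.pi (fun j => (Finsupp.lapply j.2).comp
      (((b j.1).repr.toLinearMap).comp (pk j.1))) with hφdef
  have hφ : Function.Injective φ := by
    rw [injective_iff_map_eq_zero]
    intro x hx
    have hk : ∀ k, pk k x = 0 := by
      intro k
      have hr : (b k).repr (pk k x) = 0 := by
        ext i
        have h3 := congrFun hx ⟨k, i⟩
        simpa [hφdef] using h3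
      simpa using (b k).repr.map_eq_zero_iff.mp hr
    apply Subtype.ext
    funext k
    have h4 := congrArg (Subtype.val) (hk k)
    simpa [hpk, hproj, LinearMap.restrict_apply] using h4
  exact free_transport (NFPi.free_of_embed_pi φ hφ)
end

section
/- If A is a nearly free ℤ-module and F is a free ℤ-module of countable rank, then Hom_ℤ(F, A) is nearly free. -/
open Submodule Set

/-- For a finite set of vectors in `σ → ℤ`, there is a finite set of coordinates
on which their span injects. -/
lemma exists_finset_coords {σ : Type*} (s : Finset (σ → ℤ)) :
    ∃ J : Finset σ, ∀ x ∈ Submodule.span ℤ (s : Set (σ → ℤ)),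
      (∀ j ∈ J, x j = 0) → x = 0 := by
  classical
  induction s using Finset.induction with
  | empty => exact ⟨∅, by simp⟩
  | @insert v s hv ih =>
    obtain ⟨J, hJ⟩ := ih
    by_cases hK : ∃ x ∈ Submodule.span ℤ (insert v (s : Set (σ → ℤ))),
        (∀ j ∈ J, x j = 0) ∧ x ≠ 0
    · obtain ⟨x₀, hx₀mem, hx₀J, hx₀ne⟩ := hK
      obtain ⟨j₀, hj₀⟩ : ∃ j₀, x₀ j₀ ≠ 0 := by
        by_contra h
        push_neg at h
        exact hx₀ne (funext h)
      refine ⟨insert j₀ J, ?_⟩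
      intro x hx hxJ
      rw [Finset.coe_insert] at hx
      obtain ⟨c, y, hy, rfl⟩ := Submodule.mem_span_insert.mp hx
      obtain ⟨c₀, y₀, hy₀, hx₀⟩ := Submodule.mem_span_insert.mp hx₀mem
      have hxJ' : ∀ j ∈ J, (c • v + y) j = 0 := fun j hj => hxJ j (Finset.mem_insert_of_mem hj)
      have hkey : c₀ • (c • v + y) - c • x₀ = 0 := by
        apply hJ
        · rw [hx₀]
          have : c₀ • (c • v + y) - c • (c₀ • v + y₀) = c₀ • y - c • y₀ := by module
          rw [this]
          exact sub_mem (Submodule.smul_mem _ _ hy) (Submodule.smul_mem _ _ hy₀)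
        · intro j hj
          have h1 : (c • v + y) j = 0 := hxJ' j hj
          have h2 : x₀ j = 0 := hx₀J j hj
          simp only [Pi.sub_apply, Pi.smul_apply, h1, h2, smul_zero, sub_zero]
      have hcz : c * x₀ j₀ = 0 := by
        have h3 := congrFun hkey j₀
        have hj0 : (c • v + y) j₀ = 0 := hxJ j₀ (Finset.mem_insert_self _ _)
        simp only [Pi.sub_apply, Pi.smul_apply, Pi.zero_apply, hj0, smul_zero, mul_zero,
          zero_sub, neg_eq_zero, smul_eq_mul] at h3
        exact h3
      have hc : c = 0 := by
        rcases mul_eq_zero.mp hcz with h | h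
        · exact h
        · exact absurd h hj₀
      subst hc
      apply hJ _ (by simpa using hy)
      intro j hj
      simpa using hxJ' j hj
    · push_neg at hK
      exact ⟨J, fun x hx hxJ => hK x (by rwa [Finset.coe_insert] at hx) hxJ⟩

lemma finite_of_mul_mem_span {σ : Type*} (s : Finset (σ → ℤ)) (G : Submodule ℤ (σ → ℤ))
    (hG : ∀ x ∈ G, ∃ m : ℤ, m ≠ 0 ∧ m • x ∈ Submodule.span ℤ (s : Set (σ → ℤ))) :
    Module.Finite ℤ G := by
  classical
  obtain ⟨J, hJ⟩ := exists_finset_coords s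
  let φ : (σ → ℤ) →ₗ[ℤ] (J → ℤ) := LinearMap.pi fun j => LinearMap.proj (j : σ)
  let ψ := φ.comp G.subtype
  have hinj : Function.Injective ψ := by
    rw [injective_iff_map_eq_zero]
    intro x hx
    obtain ⟨m, hm, hmx⟩ := hG x.1 x.2
    have hz : m • (x : σ → ℤ) = 0 := by
      apply hJ _ hmx
      intro j hj
      have : ψ x ⟨j, hj⟩ = 0 := by rw [hx]; rfl
      have hxj : (x : σ → ℤ) j = 0 := this
      simp [hxj]
    have : (x : σ → ℤ) = 0 := by
      rcases smul_eq_zero.mp hz with h | h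
      · exact absurd h hm
      · exact h
    exact Subtype.ext this
  have : Module.Finite ℤ (LinearMap.range ψ) := by
    have hfg : (LinearMap.range ψ).FG := IsNoetherian.noetherian _
    exact Module.Finite.iff_fg.mpr hfg
  exact Module.Finite.equiv (LinearEquiv.ofInjective ψ hinj).symm

lemma extend_indep {σ : Type*} (G H : Submodule ℤ (σ → ℤ)) (hGH : G ≤ H) [Module.Finite ℤ H]
    (hpure : ∀ x ∈ H, ∀ m : ℤ, m ≠ 0 → m • x ∈ G → x ∈ G)
    (B : Set (σ → ℤ)) (hBG : Submodule.span ℤ B = G)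
    (hBi : LinearIndependent ℤ ((↑) : B → (σ → ℤ))) :
    ∃ C : Set (σ → ℤ), B ⊆ C ∧ Submodule.span ℤ C = H ∧ LinearIndependent ℤ ((↑) : C → (σ → ℤ)) := by
  classical
  set G' : Submodule ℤ ↥H := Submodule.comap H.subtype G with hG'
  haveI : NoZeroSMulDivisors ℤ (H ⧸ G') := by
    constructor
    intro c x hcx
    obtain ⟨y, rfl⟩ := Submodule.Quotient.mk_surjective G' x
    by_cases hc : c = 0
    · exact Or.inl hc
    · refine Or.inr ?_
      rw [← Submodule.Quotient.mk_smul] at hcx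
      rw [Submodule.Quotient.mk_eq_zero] at hcx ⊢
      exact hpure y.1 y.2 c hc (by simpa using (Submodule.mem_comap.mp hcx))
  haveI : Module.Free ℤ (H ⧸ G') := Module.free_of_finite_type_torsion_free'
  set κ := Module.Free.ChooseBasisIndex ℤ (H ⧸ G') with hκ
  set q : Module.Basis κ ℤ (H ⧸ G') := Module.Free.chooseBasis ℤ (H ⧸ G') with hq
  have hsurj : ∀ k : κ, ∃ y : H, Submodule.Quotient.mk y = q k :=
    fun k => Submodule.Quotient.mk_surjective G' (q k)
  choose w hw using hsurj
  set w' : κ → (σ → ℤ) := fun k => (w k : σ → ℤ) with hw'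
  -- the lifted family is linearly independent
  have hwind : LinearIndependent ℤ w := by
    apply LinearIndependent.of_comp G'.mkQ
    have : (G'.mkQ : H → H ⧸ G') ∘ w = ⇑q := by
      funext k
      simp [Submodule.mkQ_apply, hw k]
    rw [this]
    exact q.linearIndependent
  have hw'ind : LinearIndependent ℤ w' := by
    have h := hwind.map' H.subtype (Submodule.ker_subtype H)
    exact h
  -- disjointness of G and the span of the lifts
  have hdisj : Disjoint G (Submodule.span ℤ (Set.range w')) := by
    rw [Submodule.disjoint_def]
    intro x hxG hxspan
    rw [mem_span_range_iff_exists_fun] at hxspan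
    obtain ⟨c, hc⟩ := hxspan
    have hcH : (∑ k, c k • w k : H) = ⟨x, hGH hxG⟩ := by
      apply Subtype.ext
      push_cast
      exact hc
    have hq0 : (∑ k, c k • q k : H ⧸ G') = 0 := by
      have := congrArg (G'.mkQ) hcH
      rw [map_sum] at this
      simp only [map_smul, Submodule.mkQ_apply, hw] at this
      rw [this]
      rw [Submodule.Quotient.mk_eq_zero]
      exact hxG
    have hc0 : ∀ k, c k = 0 := by
      have := linearIndependent_iff'.mp q.linearIndependent Finset.univ c (by
        simpa using hq0)
      intro k; exact this k (Finset.mem_univ k)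
    have : x = 0 := by
      rw [← hc]
      simp [hc0]
    simp [this]
  refine ⟨B ∪ Set.range w', Set.subset_union_left, ?_, ?_⟩
  · -- span
    rw [Submodule.span_union, hBG]
    apply le_antisymm
    · apply sup_le hGH
      rw [Submodule.span_le]
      rintro _ ⟨k, rfl⟩
      exact (w k).2
    · intro x hx
      set xH : ↥H := ⟨x, hx⟩ with hxH
      have hrepr : G'.mkQ xH = ∑ k, q.repr (G'.mkQ xH) k • q k := (q.sum_repr _).symm
      set c : κ → ℤ := fun k => q.repr (G'.mkQ xH) k with hcdef
      have hmem : xH - ∑ k, c k • w k ∈ G' := by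
        rw [← Submodule.Quotient.mk_eq_zero]
        have : Submodule.Quotient.mk (p := G') (xH - ∑ k, c k • w k)
            = G'.mkQ xH - ∑ k, c k • q k := by
          rw [← Submodule.mkQ_apply, map_sub, map_sum]
          simp only [map_smul, Submodule.mkQ_apply, hw]
        rw [this, ← hrepr]
        simp
      have hmemG : x - ∑ k, c k • w' k ∈ G := by
        have h := Submodule.mem_comap.mp hmem
        simpa using h
      have h1 : x - ∑ k, c k • w' k ∈ G ⊔ Submodule.span ℤ (Set.range w') :=
        Submodule.mem_sup_left hmemG
      have h2 : (∑ k, c k • w' k) ∈ G ⊔ Submodule.span ℤ (Set.range w') := by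
        apply Submodule.mem_sup_right
        exact Submodule.sum_mem _ fun k _ =>
          Submodule.smul_mem _ _ (Submodule.subset_span (Set.mem_range_self k))
      simpa using add_mem h1 h2
  · -- linear independence
    apply LinearIndepOn.union (v := id) hBi hw'ind.linearIndepOn_id
    rw [Set.image_id, Set.image_id, hBG]
    exact hdisj

theorem specker {σ : Type*} [Countable σ] (N : Submodule ℤ (σ → ℤ)) [Countable N] :
    Module.Free ℤ N := by
  classical
  haveI : Nonempty N := ⟨0⟩
  obtain ⟨e, he⟩ := exists_surjective_nat N
  -- the finite "stages"
  set sn : ℕ → Finset (σ → ℤ) := fun n => (Finset.range n).image (fun k => (e k : σ → ℤ))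
    with hsn
  -- purification of the span of the first n elements inside N
  set G : ℕ → Submodule ℤ (σ → ℤ) := fun n =>
    { carrier := {x | x ∈ N ∧ ∃ m : ℤ, m ≠ 0 ∧ m • x ∈ Submodule.span ℤ ((sn n : Set (σ → ℤ)))}
      add_mem' := by
        rintro a b ⟨haN, m₁, hm₁, hma⟩ ⟨hbN, m₂, hm₂, hmb⟩
        refine ⟨add_mem haN hbN, m₁ * m₂, mul_ne_zero hm₁ hm₂, ?_⟩
        have : (m₁ * m₂) • (a + b) = m₂ • (m₁ • a) + m₁ • (m₂ • b) := by
          rw [smul_add]; rw [smul_smul, smul_smul]; ring_nf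
        rw [this]
        exact add_mem (Submodule.smul_mem _ _ hma) (Submodule.smul_mem _ _ hmb)
      zero_mem' := ⟨zero_mem N, 1, one_ne_zero, by simp⟩
      smul_mem' := by
        rintro c x ⟨hxN, m, hm, hmx⟩
        refine ⟨Submodule.smul_mem _ _ hxN, m, hm, ?_⟩
        rw [smul_comm]
        exact Submodule.smul_mem _ _ hmx } with hG
  have hGN : ∀ n, G n ≤ N := fun n x hx => hx.1
  have hGmono : ∀ n, G n ≤ G (n + 1) := by
    intro n x hx
    obtain ⟨hxN, m, hm, hmx⟩ := hx
    refine ⟨hxN, m, hm, ?_⟩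
    refine Submodule.span_mono ?_ hmx
    intro y hy
    simp only [hsn, Finset.coe_image, Finset.coe_range] at hy ⊢
    obtain ⟨k, hk, rfl⟩ := hy
    exact ⟨k, Nat.lt_succ_of_lt hk, rfl⟩
  have hfin : ∀ n, Module.Finite ℤ (G n) := fun n =>
    finite_of_mul_mem_span (sn n) (G n) (fun x hx => hx.2)
  have hpure : ∀ n, ∀ x ∈ G (n + 1), ∀ m : ℤ, m ≠ 0 → m • x ∈ G n → x ∈ G n := by
    intro n x hx m hm hmx
    obtain ⟨hxN, _⟩ := hx
    obtain ⟨_, m', hm', hm'x⟩ := hmx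
    refine ⟨hxN, m' * m, mul_ne_zero hm' hm, ?_⟩
    rw [mul_smul]
    exact hm'x
  have hG0 : G 0 = ⊥ := by
    rw [eq_bot_iff]
    rintro x ⟨hxN, m, hm, hmx⟩
    have : m • x = 0 := by
      simpa [hsn] using hmx
    rcases smul_eq_zero.mp this with h | h
    · exact absurd h hm
    · simp [h]
  have hunion : ∀ x ∈ N, ∃ n, x ∈ G n := by
    intro x hx
    obtain ⟨k, hk⟩ := he ⟨x, hx⟩
    refine ⟨k + 1, hx, 1, one_ne_zero, ?_⟩
    rw [one_smul]
    apply Submodule.subset_span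
    simp only [hsn, Finset.coe_image, Finset.coe_range]
    refine ⟨k, Nat.lt_succ_self k, ?_⟩
    show (e k : σ → ℤ) = x
    rw [hk]
  -- the recursive construction of compatible independent generating sets
  have step : ∀ n (B : Set (σ → ℤ)), Submodule.span ℤ B = G n →
      LinearIndependent ℤ ((↑) : B → (σ → ℤ)) →
      ∃ C, B ⊆ C ∧ Submodule.span ℤ C = G (n + 1) ∧
        LinearIndependent ℤ ((↑) : C → (σ → ℤ)) := by
    intro n B h1 h2
    haveI := hfin (n + 1)
    exact extend_indep (G n) (G (n + 1)) (hGmono n) (hpure n) B h1 h2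
  let T : ℕ → Type _ := fun n => {B : Set (σ → ℤ) //
    Submodule.span ℤ B = G n ∧ LinearIndependent ℤ ((↑) : B → (σ → ℤ))}
  let base : T 0 := ⟨∅, by rw [Submodule.span_empty, hG0], linearIndependent_empty ℤ _⟩
  let next : ∀ n, T n → T (n + 1) := fun n p =>
    ⟨Classical.choose (step n p.1 p.2.1 p.2.2),
      (Classical.choose_spec (step n p.1 p.2.1 p.2.2)).2.1,
      (Classical.choose_spec (step n p.1 p.2.1 p.2.2)).2.2⟩
  let Bf : ∀ n, T n := fun n => Nat.rec base next n
  set B : ℕ → Set (σ → ℤ) := fun n => (Bf n).1 with hB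
  have hstep : ∀ n, B n ⊆ B (n + 1) := by
    intro n
    show (Bf n).1 ⊆ (next n (Bf n)).1
    exact (Classical.choose_spec (step n (Bf n).1 (Bf n).2.1 (Bf n).2.2)).1
  have hchain : ∀ m n, m ≤ n → B m ⊆ B n := by
    intro m n h
    induction n with
    | zero => rw [Nat.le_zero.mp h]
    | succ n ih =>
      rcases Nat.lt_or_ge m (n + 1) with h' | h'
      · exact subset_trans (ih (by omega)) (hstep n)
      · rw [(by omega : m = n + 1)]
  have hdir : Directed (· ⊆ ·) B := fun m n =>
    ⟨max m n, hchain _ _ (le_max_left m n), hchain _ _ (le_max_right m n)⟩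
  have hind : LinearIndependent ℤ ((↑) : (⋃ n, B n) → (σ → ℤ)) :=
    linearIndepOn_iUnion_of_directed (v := id) hdir (fun n => (Bf n).2.2)
  have hspan : Submodule.span ℤ (⋃ n, B n) = N := by
    rw [Submodule.span_iUnion]
    apply le_antisymm
    · apply iSup_le
      intro n
      rw [(Bf n).2.1]
      exact hGN n
    · intro x hx
      obtain ⟨n, hn⟩ := hunion x hx
      apply Submodule.mem_iSup_of_mem n
      rw [(Bf n).2.1]
      exact hn
  have hfree : Module.Free ℤ
      (Submodule.span ℤ (Set.range ((↑) : (⋃ n, B n) → (σ → ℤ)))) :=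
    Module.Free.of_basis (Module.Basis.span hind)
  rw [Subtype.range_coe, hspan] at hfree
  exact hfree



/-- Any additive hom between ℤ-modules is linear, for arbitrary `Module ℤ` instances. -/
def mkIntLinear {M N : Type*} [AddCommGroup M] [AddCommGroup N] [iM : Module ℤ M]
    [iN : Module ℤ N] (f : M →+ N) : M →ₗ[ℤ] N where
  toFun := f
  map_add' := map_add f
  map_smul' := fun m x => by
    have hM : iM = AddCommGroup.toIntModule M := by
      letI := AddCommGroup.uniqueIntModule (M := M)
      exact Subsingleton.elim _ _
    have hN : iN = AddCommGroup.toIntModule N := by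
      letI := AddCommGroup.uniqueIntModule (M := N)
      exact Subsingleton.elim _ _
    subst hM
    subst hN
    simp only [RingHom.id_apply]
    exact map_zsmul f m x

@[simp] lemma mkIntLinear_apply {M N : Type*} [AddCommGroup M] [AddCommGroup N] [Module ℤ M]
    [Module ℤ N] (f : M →+ N) (x : M) : mkIntLinear f x = f x := rfl

/-- If `A` is a nearly free ℤ-module and `F` is a free ℤ-module of countable
rank, then `Hom_ℤ(F, A)` is nearly free. -/
theorem nearlyFree_hom (A F : Type*) [AddCommGroup A] [Module ℤ A]
    [AddCommGroup F] [Module ℤ F] (hA : NearlyFree A)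
    (ι : Type*) [Countable ι] (b : Module.Basis ι ℤ F) :
    NearlyFree (F →ₗ[ℤ] A) := by
  classical
  intro N hN
  haveI := hN
  -- the countable submodule of `A` spanned by all values on the basis
  set v : N × ι → A := fun p => (p.1 : F →ₗ[ℤ] A) (b p.2) with hv
  set A' : Submodule ℤ A := Submodule.span ℤ (Set.range v) with hA'
  haveI : Module.Free ℤ A' := hA A' inferInstance
  set κ := Module.Free.ChooseBasisIndex ℤ A' with hκ
  set c : Module.Basis κ ℤ A' := Module.Free.chooseBasis ℤ A' with hc
  haveI : Countable κ := c.injective.countable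
  have hmem : ∀ (f : N) (i : ι), (f : F →ₗ[ℤ] A) (b i) ∈ A' :=
    fun f i => Submodule.subset_span ⟨(f, i), rfl⟩
  -- the additive embedding of `N` into `ι × κ → ℤ`
  set Ψ : N →+ (ι × κ → ℤ) :=
    { toFun := fun f => fun p => c.repr ⟨(f : F →ₗ[ℤ] A) (b p.1), hmem f p.1⟩ p.2
      map_zero' := by
        funext p
        dsimp only [Pi.zero_apply]
        have h1 : ((0 : N) : F →ₗ[ℤ] A) (b p.1) = 0 := by simp
        have h2 : (⟨((0 : N) : F →ₗ[ℤ] A) (b p.1), hmem 0 p.1⟩ : A') = 0 :=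
          Subtype.ext h1
        rw [h2]
        simp
      map_add' := by
        intro f g
        funext p
        dsimp only [Pi.add_apply]
        have h1 : ((f + g : N) : F →ₗ[ℤ] A) (b p.1)
            = (f : F →ₗ[ℤ] A) (b p.1) + (g : F →ₗ[ℤ] A) (b p.1) := by
          rw [Submodule.coe_add]
          simp
        have h2 : (⟨((f + g : N) : F →ₗ[ℤ] A) (b p.1), hmem (f + g) p.1⟩ : A')
            = ⟨(f : F →ₗ[ℤ] A) (b p.1), hmem f p.1⟩ + ⟨(g : F →ₗ[ℤ] A) (b p.1), hmem g p.1⟩ :=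
          Subtype.ext h1
        rw [h2, map_add]
        simp } with hΨ
  have hinj : Function.Injective Ψ := by
    rw [injective_iff_map_eq_zero]
    intro f hf
    have hval : ∀ i : ι, (f : F →ₗ[ℤ] A) (b i) = 0 := by
      intro i
      have h0 : c.repr ⟨(f : F →ₗ[ℤ] A) (b i), hmem f i⟩ = 0 := by
        ext k
        exact congrFun hf (i, k)
      have h1 : (⟨(f : F →ₗ[ℤ] A) (b i), hmem f i⟩ : A') = 0 := by
        have := congrArg c.repr.symm h0
        simpa using this
      exact congrArg Subtype.val h1
    have hf0 : (f : F →ₗ[ℤ] A) = 0 := by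
      apply b.ext
      intro i
      simpa using hval i
    exact Subtype.ext hf0
  set Ψ' : N →ₗ[ℤ] (ι × κ → ℤ) := mkIntLinear Ψ with hΨ'
  have hinj' : Function.Injective Ψ' := hinj
  set Rng : Submodule ℤ (ι × κ → ℤ) := LinearMap.range Ψ' with hRng
  haveI : Countable Rng := (LinearMap.surjective_rangeRestrict Ψ').countable
  haveI : Module.Free ℤ Rng := specker Rng
  exact Module.Free.of_equiv (LinearEquiv.ofInjective Ψ' hinj').symm
end
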